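/- For every unweighted congestion game with n ≥ 1 players and linear latency functions ℓ_e(x) = α_e x (α_e ≥ 0), every pure Nash equilibrium S, and every strategy profile O, it holds that max_{i ∈ [n]} c_i(S) ≤ 4√n · max_{i ∈ [n]} c_i(O). In particular, the price of anarchy with respect to the social function MAX(S) = max_i c_i(S) is O(√n). -/

import Mathlib

open Finset

namespace CG

variable {n : ℕ} {E : Type*} [Fintype E] [DecidableEq E]

/-- The congestion (total weight) of resource `e` in profile `S`. -/
noncomputable def load (w : Fin n → ℝ) (S : Fin n → Finset E) (e : E) : ℝ :=
  ∑ i ∈ univ.filter fun i => e ∈ S i, w i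

/-- The cost of player `i` in profile `S`. -/
noncomputable def cost (w : Fin n → ℝ) (ℓ : E → ℝ → ℝ) (S : Fin n → Finset E) (i : Fin n) : ℝ :=
  ∑ e ∈ S i, ℓ e (load w S e)

/-- The social cost `SUM(S)`, the sum of the players' costs. -/
noncomputable def social (w : Fin n → ℝ) (ℓ : E → ℝ → ℝ) (S : Fin n → Finset E) : ℝ :=
  ∑ i, cost w ℓ S i

/-- The congestion of resource `e` due to the players preceding `i` (used for one-round walks). -/
noncomputable def preLoad (w : Fin n → ℝ) (S : Fin n → Finset E) (i : Fin n) (e : E) : ℝ :=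
  ∑ j ∈ univ.filter fun j => j < i ∧ e ∈ S j, w j

end CG

open CG

theorem poa_max_unweighted_linear
    (n : ℕ) (hn : 0 < n)
    (E : Type*) [Fintype E] [DecidableEq E]
    (w : Fin n → ℝ) (hw : ∀ i, w i = 1)
    (Strat : Fin n → Set (Finset E)) (hStrat : ∀ i, (Strat i).Nonempty)
    (α : E → ℝ) (hα : ∀ e, 0 ≤ α e)
    (ℓ : E → ℝ → ℝ) (hℓ : ∀ e x, ℓ e x = α e * x)
    (S O : Fin n → Finset E)
    (hS : ∀ i, S i ∈ Strat i) (hO : ∀ i, O i ∈ Strat i)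
    (hNE : ∀ i, ∀ t ∈ Strat i, cost w ℓ S i ≤ cost w ℓ (Function.update S i t) i) :
    (⨆ i, cost w ℓ S i) ≤ 4 * Real.sqrt n * ⨆ i, cost w ℓ O i := by
  haveI : Nonempty (Fin n) := ⟨⟨0, hn⟩⟩
  -- loads are cardinalities
  have hloadcard : ∀ (P : Fin n → Finset E) (e : E),
      load w P e = ((univ.filter fun i => e ∈ P i).card : ℝ) := by
    intro P e; simp [load, hw]
  have hload_nonneg : ∀ (P : Fin n → Finset E) (e : E), 0 ≤ load w P e := by
    intro P e; rw [hloadcard]; positivity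
  -- load is a nonneg integer, so load ≤ load^2
  have hload_sq : ∀ (P : Fin n → Finset E) (e : E), load w P e ≤ load w P e ^ 2 := by
    intro P e
    rw [hloadcard]
    set c := (univ.filter fun i => e ∈ P i).card with hc
    rcases Nat.eq_zero_or_pos c with h | h
    · simp [h]
    · have : (1 : ℝ) ≤ (c : ℝ) := by exact_mod_cast h
      nlinarith
  set LS := load w S with hLS
  set LO := load w O with hLO'
  -- cost in terms of α
  have hcost : ∀ (P : Fin n → Finset E) (i : Fin n),
      cost w ℓ P i = ∑ e ∈ P i, α e * load w P e := by
    intro P i; simp [cost, hℓ]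
  have hcost_nonneg : ∀ (P : Fin n → Finset E) (i : Fin n), 0 ≤ cost w ℓ P i := by
    intro P i; rw [hcost]
    exact Finset.sum_nonneg fun e _ => mul_nonneg (hα e) (hload_nonneg P e)
  -- double counting
  have hdouble : ∀ (P : Fin n → Finset E) (f : E → ℝ),
      ∑ i, ∑ e ∈ P i, f e = ∑ e, load w P e * f e := by
    intro P f
    have h1 : ∀ i : Fin n, ∑ e ∈ P i, f e = ∑ e, if e ∈ P i then f e else 0 := by
      intro i
      rw [← Finset.sum_filter]
      congr 1
      ext e; simp
    simp_rw [h1]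
    rw [Finset.sum_comm]
    refine Finset.sum_congr rfl fun e _ => ?_
    rw [hloadcard, ← Finset.sum_filter, Finset.sum_const, nsmul_eq_mul]
  -- sup of O costs
  set M := ⨆ i, cost w ℓ O i with hM
  have hMle : ∀ i, cost w ℓ O i ≤ M :=
    fun i => le_ciSup (Set.Finite.bddAbove (Set.finite_range _)) i
  have hM0 : 0 ≤ M := le_trans (hcost_nonneg O (Classical.arbitrary _)) (hMle _)
  -- SUM(S), SUM(O)
  set SUMS := ∑ e, α e * LS e ^ 2 with hSUMS
  set SUMO := ∑ e, α e * LO e ^ 2 with hSUMO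
  have hSUMSeq : SUMS = ∑ i, cost w ℓ S i := by
    rw [hSUMS]
    have := hdouble S (fun e => α e * LS e)
    simp_rw [hLS, ← hcost, ← hLS] at this
    rw [this]
    refine Finset.sum_congr rfl fun e _ => ?_
    ring
  have hSUMOeq : SUMO = ∑ i, cost w ℓ O i := by
    rw [hSUMO]
    have := hdouble O (fun e => α e * LO e)
    simp_rw [hLO', ← hcost, ← hLO'] at this
    rw [this]
    refine Finset.sum_congr rfl fun e _ => ?_
    ring
  have hSUMS0 : 0 ≤ SUMS := by
    rw [hSUMSeq]; exact Finset.sum_nonneg fun i _ => hcost_nonneg S i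
  have hSUMO0 : 0 ≤ SUMO := by
    rw [hSUMOeq]; exact Finset.sum_nonneg fun i _ => hcost_nonneg O i
  -- load after deviation
  have hload_update : ∀ (i : Fin n) (t : Finset E) (e : E),
      load w (Function.update S i t) e ≤ LS e + 1 := by
    intro i t e
    have h1 : ∀ (P : Fin n → Finset E), load w P e = ∑ j, if e ∈ P j then (1:ℝ) else 0 := by
      intro P
      rw [load, Finset.sum_filter]
      exact Finset.sum_congr rfl fun j _ => by simp [hw]
    rw [h1, hLS, h1]
    have h2 : (∑ j, if e ∈ Function.update S i t j then (1:ℝ) else 0)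
        ≤ ∑ j : Fin n, ((if e ∈ S j then (1:ℝ) else 0) + (if j = i then 1 else 0)) := by
      refine Finset.sum_le_sum fun j _ => ?_
      rcases eq_or_ne j i with rfl | hne
      · simp only [Function.update_self, if_pos rfl]
        split <;> split <;> norm_num
      · rw [Function.update_of_ne hne, if_neg hne, add_zero]
    refine h2.trans ?_
    rw [Finset.sum_add_distrib, Finset.sum_ite_eq' univ i (fun _ => (1:ℝ))]
    simp
  -- Nash inequality pointwise
  have hNash : ∀ i : Fin n, cost w ℓ S i ≤ ∑ e ∈ O i, α e * (LS e + 1) := by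
    intro i
    refine (hNE i (O i) (hO i)).trans ?_
    rw [hcost, Function.update_self]
    exact Finset.sum_le_sum fun e _ =>
      mul_le_mul_of_nonneg_left (hload_update i (O i) e) (hα e)
  -- sum of Nash inequalities: SUMS ≤ ∑ e, LO e * (α e * (LS e + 1))
  have hNashSum : SUMS ≤ ∑ e, LO e * (α e * (LS e + 1)) := by
    rw [hSUMSeq, ← hdouble O (fun e => α e * (LS e + 1))]
    exact Finset.sum_le_sum fun i _ => hNash i
  -- pointwise bound: LO * (α * (LS + 1)) ≤ α*LS²/2 + (3/2) α*LO²
  have hSUMS3 : SUMS ≤ 3 * SUMO := by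
    have key : ∑ e, LO e * (α e * (LS e + 1))
        ≤ ∑ e, ((1/2) * (α e * LS e ^ 2) + (3/2) * (α e * LO e ^ 2)) := by
      refine Finset.sum_le_sum fun e _ => ?_
      have h1 := hload_sq O e
      have h2 := hload_nonneg S e
      have h3 := hload_nonneg O e
      have h4 := hα e
      have h5 : 0 ≤ (LS e - LO e)^2 := sq_nonneg _
      nlinarith [mul_nonneg h4 h5, mul_nonneg h4 (sub_nonneg.mpr h1)]
    have := hNashSum.trans key
    rw [Finset.sum_add_distrib, ← Finset.mul_sum, ← Finset.mul_sum] at this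
    rw [← hSUMS, ← hSUMO] at this
    linarith
  -- SUMO ≤ n * M
  have hSUMOn : SUMO ≤ n * M := by
    rw [hSUMOeq]
    calc ∑ i, cost w ℓ O i ≤ ∑ _i : Fin n, M := Finset.sum_le_sum fun i _ => hMle i
      _ = n * M := by simp [Finset.sum_const, Finset.card_univ]
  -- maximal player in S
  obtain ⟨i0, hi0⟩ := Finite.exists_max (cost w ℓ S)
  -- the two parts of the Nash bound at i0
  set A := ∑ e ∈ O i0, α e * LS e with hA
  set B := ∑ e ∈ O i0, α e with hB
  have hA0 : 0 ≤ A :=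
    Finset.sum_nonneg fun e _ => mul_nonneg (hα e) (hload_nonneg S e)
  have hB0 : 0 ≤ B := Finset.sum_nonneg fun e _ => hα e
  have hi0bound : cost w ℓ S i0 ≤ A + B := by
    refine (hNash i0).trans ?_
    rw [hA, hB, ← Finset.sum_add_distrib]
    exact le_of_eq (Finset.sum_congr rfl fun e _ => by ring)
  -- B ≤ M
  have hBM : B ≤ M := by
    refine le_trans ?_ (hMle i0)
    rw [hcost]
    refine Finset.sum_le_sum fun e he => ?_
    have h1 : (1 : ℝ) ≤ LO e := by
      rw [hLO', load]
      have hmem : i0 ∈ univ.filter fun j => e ∈ O j := by simp [he]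
      have := Finset.single_le_sum (f := w) (fun j _ => by rw [hw]; norm_num) hmem
      rw [hw] at this
      exact this
    nlinarith [hα e]
  -- Cauchy–Schwarz: A² ≤ B * SUMS
  have hCS : A ^ 2 ≤ B * SUMS := by
    have h := Finset.sum_mul_sq_le_sq_mul_sq (O i0)
      (fun e => Real.sqrt (α e)) (fun e => Real.sqrt (α e) * LS e)
    have e1 : ∑ e ∈ O i0, Real.sqrt (α e) * (Real.sqrt (α e) * LS e) = A := by
      refine Finset.sum_congr rfl fun e _ => ?_
      rw [← mul_assoc, Real.mul_self_sqrt (hα e)]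
    have e2 : ∑ e ∈ O i0, Real.sqrt (α e) ^ 2 = B := by
      refine Finset.sum_congr rfl fun e _ => ?_
      rw [Real.sq_sqrt (hα e)]
    have e3 : ∑ e ∈ O i0, (Real.sqrt (α e) * LS e) ^ 2 ≤ SUMS := by
      have e4 : ∑ e ∈ O i0, (Real.sqrt (α e) * LS e) ^ 2
          = ∑ e ∈ O i0, α e * LS e ^ 2 := by
        refine Finset.sum_congr rfl fun e _ => ?_
        rw [mul_pow, Real.sq_sqrt (hα e)]
      rw [e4, hSUMS]
      exact Finset.sum_le_sum_of_subset_of_nonneg (Finset.subset_univ _)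
        (fun e _ _ => mul_nonneg (hα e) (sq_nonneg _))
    rw [e1, e2] at h
    calc A ^ 2 ≤ B * ∑ e ∈ O i0, (Real.sqrt (α e) * LS e) ^ 2 := h
      _ ≤ B * SUMS := mul_le_mul_of_nonneg_left e3 hB0
  -- conclude
  have hA2 : A ^ 2 ≤ 3 * n * M ^ 2 := by
    calc A ^ 2 ≤ B * SUMS := hCS
      _ ≤ M * (3 * (n * M)) := by
          refine mul_le_mul hBM ?_ hSUMS0 hM0
          linarith [hSUMS3, hSUMOn,
            mul_le_mul_of_nonneg_left hSUMOn (by norm_num : (0:ℝ) ≤ 3)]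
      _ = 3 * n * M ^ 2 := by ring
  have hsqn1 : 1 ≤ Real.sqrt n := by
    rw [show (1:ℝ) = Real.sqrt 1 by simp]
    exact Real.sqrt_le_sqrt (by exact_mod_cast hn)
  have hsq3 : Real.sqrt 3 ≤ 2 := by
    rw [show (2:ℝ) = Real.sqrt 4 by rw [show (4:ℝ) = 2^2 by norm_num, Real.sqrt_sq]; norm_num]
    exact Real.sqrt_le_sqrt (by norm_num)
  have hsq3n : (0:ℝ) ≤ Real.sqrt 3 := Real.sqrt_nonneg 3
  have hsqnn : (0:ℝ) ≤ Real.sqrt n := Real.sqrt_nonneg n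
  have hs3 : Real.sqrt 3 ^ 2 = 3 := Real.sq_sqrt (by norm_num)
  have hsn : Real.sqrt n ^ 2 = (n:ℝ) := Real.sq_sqrt (Nat.cast_nonneg n)
  have hAbound : A ≤ Real.sqrt 3 * Real.sqrt n * M := by
    have h1 : A ≤ Real.sqrt (3 * n * M ^ 2) := by
      rw [← Real.sqrt_sq hA0]; exact Real.sqrt_le_sqrt hA2
    refine h1.trans (le_of_eq ?_)
    rw [Real.sqrt_mul (by positivity : (0:ℝ) ≤ 3 * n), Real.sqrt_sq hM0,
      Real.sqrt_mul (by norm_num : (0:ℝ) ≤ 3)]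
  have hfinal : cost w ℓ S i0 ≤ 4 * Real.sqrt n * M := by
    have t1 : Real.sqrt 3 * Real.sqrt n * M ≤ 2 * (Real.sqrt n * M) := by
      have h := mul_le_mul_of_nonneg_right hsq3 (mul_nonneg hsqnn hM0)
      calc Real.sqrt 3 * Real.sqrt n * M = Real.sqrt 3 * (Real.sqrt n * M) := by ring
        _ ≤ 2 * (Real.sqrt n * M) := h
    have t2 : M ≤ Real.sqrt n * M := by
      have h := mul_le_mul_of_nonneg_right hsqn1 hM0
      simpa using h
    have t3 : 0 ≤ Real.sqrt n * M := mul_nonneg hsqnn hM0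
    linarith [hi0bound, hAbound, hBM]
  exact ciSup_le fun i => (hi0 i).trans hfinal
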